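/- Perfect reconstruction of the two-channel spectral-sampling spline graph filter bank: suppose U₀ is an N×N real orthogonal matrix, U₁ is an (N/2)×(N/2) real matrix with U₁ᵀ U₁ = I_{N/2}, and ψ_n · ψ_{N-1-n} ≠ 1 for all n ∈ {0, ..., N/2 - 1}. Let H̄_LP = (1/2)(I_N + Ψ), H̄_HP = I_N - H̄_LP, and H̄_INV = Ψ̃ (I_N - J_N Ψ) with Ψ̃ = diag(1/(1 - ψ_n ψ_{N-1-n}))_{n=0}^{N-1}. Then for every signal f ∈ ℝ^N, the filter bank output f_out = U₀ H̄_INV (S̄_uLP U₁ᵀ U₁ S̄_dLP H̄_LP + S̄_uHP U₁ᵀ U₁ S̄_dHP H̄_HP) U₀ᵀ f equals f. -/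

import Mathlib

open Matrix

/-- The `n × n` exchange (counter-identity) matrix, with ones on the anti-diagonal. -/
noncomputable def exchMat (n : ℕ) : Matrix (Fin n) (Fin n) ℝ :=
  Matrix.of fun i j => if (i : ℕ) + (j : ℕ) = n - 1 then (1 : ℝ) else 0

/-- The low-pass downsampling matrix `S̄_dLP = [I_{N/2}  J_{N/2}]`, an `(N/2) × N` block
matrix (columns reindexed from `Fin (N/2) ⊕ Fin (N/2)` to `Fin N`). -/
noncomputable def SdLP (N : ℕ) (h : N / 2 + N / 2 = N) :
    Matrix (Fin (N / 2)) (Fin N) ℝ :=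
  (Matrix.fromCols (1 : Matrix (Fin (N / 2)) (Fin (N / 2)) ℝ)
    (exchMat (N / 2))).submatrix id (finSumFinEquiv.trans (finCongr h)).symm

/-- The high-pass downsampling matrix `S̄_dHP = [I_{N/2}  -J_{N/2}]`. -/
noncomputable def SdHP (N : ℕ) (h : N / 2 + N / 2 = N) :
    Matrix (Fin (N / 2)) (Fin N) ℝ :=
  (Matrix.fromCols (1 : Matrix (Fin (N / 2)) (Fin (N / 2)) ℝ)
    (-exchMat (N / 2))).submatrix id (finSumFinEquiv.trans (finCongr h)).symm

lemma exchMat_mul {n : ℕ} (M : Matrix (Fin n) (Fin n) ℝ) :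
    exchMat n * M = M.submatrix Fin.rev id := by
  ext i j
  rw [Matrix.mul_apply, Finset.sum_eq_single i.rev]
  · have hc : (i : ℕ) + (i.rev : ℕ) = n - 1 := by
      have := i.isLt; simp [Fin.val_rev]; omega
    simp only [exchMat, of_apply, if_pos hc, one_mul, submatrix_apply, id]
  · intro k _ hk
    have hc : (i : ℕ) + (k : ℕ) ≠ n - 1 := by
      intro hc; apply hk; apply Fin.ext
      have := i.isLt; have := k.isLt
      simp [Fin.val_rev]; omega
    simp [exchMat, hc]
  · simp

lemma mul_exchMat {n : ℕ} (M : Matrix (Fin n) (Fin n) ℝ) :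
    M * exchMat n = M.submatrix id Fin.rev := by
  ext i j
  rw [Matrix.mul_apply, Finset.sum_eq_single j.rev]
  · have hc : (j.rev : ℕ) + (j : ℕ) = n - 1 := by
      have := j.isLt; simp [Fin.val_rev]; omega
    simp only [exchMat, of_apply, if_pos hc, mul_one, submatrix_apply, id]
  · intro k _ hk
    have hc : (k : ℕ) + (j : ℕ) ≠ n - 1 := by
      intro hc; apply hk; apply Fin.ext
      have := j.isLt; have := k.isLt
      simp [Fin.val_rev]; omega
    simp [exchMat, hc]
  · simp

lemma exchMat_mul_exchMat (n : ℕ) : exchMat n * exchMat n = 1 := by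
  rw [exchMat_mul]
  ext i j
  simp only [submatrix_apply, id, exchMat, of_apply, one_apply]
  have := i.isLt; have := j.isLt
  by_cases hij : i = j
  · subst hij
    rw [if_pos rfl, if_pos (by simp [Fin.val_rev]; omega)]
  · rw [if_neg hij, if_neg]
    intro hc; apply hij; apply Fin.ext
    simp [Fin.val_rev] at hc; omega

lemma exchMat_transpose (n : ℕ) : (exchMat n)ᵀ = exchMat n := by
  ext i j; simp [exchMat, transpose_apply, add_comm]

lemma diagonal_mul_exchMat {n : ℕ} (d : Fin n → ℝ) :
    Matrix.diagonal d * exchMat n = exchMat n * Matrix.diagonal (fun i => d i.rev) := by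
  rw [mul_exchMat, exchMat_mul]
  ext i j
  simp only [submatrix_apply, id, diagonal_apply]
  by_cases hc : Fin.rev i = j
  · rw [if_pos (by rw [← hc, Fin.rev_rev]), if_pos hc, Fin.rev_rev]
  · rw [if_neg, if_neg hc]
    intro hh; apply hc; rw [hh, Fin.rev_rev]

lemma blocks_eq (N : ℕ) (h : N / 2 + N / 2 = N) (ε : ℝ) :
    Matrix.fromBlocks (1 : Matrix (Fin (N / 2)) (Fin (N / 2)) ℝ) (ε • exchMat (N / 2))
        (ε • exchMat (N / 2)) 1
      = ((1 : Matrix (Fin N) (Fin N) ℝ) + ε • exchMat N).submatrix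
          (finSumFinEquiv.trans (finCongr h)) (finSumFinEquiv.trans (finCongr h)) := by
  ext i j
  rcases i with a | a <;> rcases j with b | b <;>
    (simp only [fromBlocks_apply₁₁, fromBlocks_apply₁₂, fromBlocks_apply₂₁, fromBlocks_apply₂₂,
        submatrix_apply, Equiv.trans_apply, finCongr_apply, finSumFinEquiv_apply_left,
        finSumFinEquiv_apply_right, Matrix.add_apply, Matrix.smul_apply, one_apply, exchMat, of_apply,
        Fin.coe_cast, Fin.coe_castAdd, Fin.coe_natAdd, smul_eq_mul, Fin.ext_iff];
     have ha := a.isLt; have hb := b.isLt;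
     split_ifs <;> (try ring) <;> (exfalso; omega))

lemma SdLP_mul (N : ℕ) (h : N / 2 + N / 2 = N) :
    (SdLP N h)ᵀ * SdLP N h = 1 + exchMat N := by
  unfold SdLP
  rw [transpose_submatrix,
    ← Matrix.submatrix_mul _ _ _ (id : Fin (N/2) → Fin (N/2)) _ Function.bijective_id,
    transpose_fromCols, fromRows_mul_fromCols, transpose_one, exchMat_transpose]
  simp only [one_mul, mul_one, exchMat_mul_exchMat]
  have hb := blocks_eq N h 1
  simp only [one_smul] at hb
  rw [hb, submatrix_submatrix, Equiv.self_comp_symm, submatrix_id_id]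

lemma SdHP_mul (N : ℕ) (h : N / 2 + N / 2 = N) :
    (SdHP N h)ᵀ * SdHP N h = 1 - exchMat N := by
  unfold SdHP
  rw [transpose_submatrix,
    ← Matrix.submatrix_mul _ _ _ (id : Fin (N/2) → Fin (N/2)) _ Function.bijective_id,
    transpose_fromCols, fromRows_mul_fromCols, transpose_one, transpose_neg,
    exchMat_transpose]
  simp only [one_mul, mul_one, mul_neg, neg_mul, neg_neg, exchMat_mul_exchMat]
  have hb := blocks_eq N h (-1)
  simp only [neg_one_smul] at hb
  rw [hb, submatrix_submatrix, Equiv.self_comp_symm, submatrix_id_id, ← sub_eq_add_neg]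

lemma core_eq (N : ℕ) (h : N / 2 + N / 2 = N) (ψ : Fin N → ℝ)
    (hψ : ∀ n : Fin N, (n : ℕ) < N / 2 → ψ n * ψ n.rev ≠ 1) :
    (Matrix.diagonal (fun n => 1 / (1 - ψ n * ψ n.rev)) *
      ((1 : Matrix (Fin N) (Fin N) ℝ) - exchMat N * Matrix.diagonal ψ)) *
    ((1 + exchMat N) * ((1 / 2 : ℝ) • ((1 : Matrix (Fin N) (Fin N) ℝ) + Matrix.diagonal ψ)) +
      (1 - exchMat N) * ((1 : Matrix (Fin N) (Fin N) ℝ) -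
        (1 / 2 : ℝ) • ((1 : Matrix (Fin N) (Fin N) ℝ) + Matrix.diagonal ψ))) = 1 := by
  have hψall : ∀ n : Fin N, 1 - ψ n * ψ n.rev ≠ 0 := by
    intro n
    rcases lt_or_ge (n : ℕ) (N / 2) with hn | hn
    · have hne := hψ n hn
      intro hc; apply hne; linarith
    · have hrev : ((n.rev : ℕ)) < N / 2 := by
        have := n.isLt; simp [Fin.val_rev]; omega
      have hne := hψ n.rev hrev
      rw [Fin.rev_rev] at hne
      intro hc; apply hne; rw [mul_comm]; linarith
  have expand : (1 + exchMat N) * ((1 / 2 : ℝ) • ((1 : Matrix (Fin N) (Fin N) ℝ) + Matrix.diagonal ψ)) +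
      (1 - exchMat N) * ((1 : Matrix (Fin N) (Fin N) ℝ) - (1 / 2 : ℝ) • (1 + Matrix.diagonal ψ)) = 1 + exchMat N * Matrix.diagonal ψ := by
    simp only [Matrix.mul_smul, mul_add, add_mul, sub_mul, mul_sub, mul_one, one_mul]
    module
  rw [expand]
  have sq : exchMat N * Matrix.diagonal ψ * (exchMat N * Matrix.diagonal ψ) = Matrix.diagonal (fun i => ψ i.rev * ψ i) := by
    have h1 : Matrix.diagonal ψ * exchMat N = exchMat N * Matrix.diagonal (fun i => ψ i.rev) := diagonal_mul_exchMat ψ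
    calc exchMat N * Matrix.diagonal ψ * (exchMat N * Matrix.diagonal ψ)
        = exchMat N * (Matrix.diagonal ψ * exchMat N) * Matrix.diagonal ψ := by
          rw [mul_assoc, ← mul_assoc (Matrix.diagonal ψ) (exchMat N) (Matrix.diagonal ψ),
            ← mul_assoc]
      _ = exchMat N * (exchMat N * Matrix.diagonal (fun i => ψ i.rev)) * Matrix.diagonal ψ := by
          rw [h1]
      _ = Matrix.diagonal (fun i => ψ i.rev * ψ i) := by
          rw [← mul_assoc, exchMat_mul_exchMat, one_mul, diagonal_mul_diagonal]
  have factor : ((1 : Matrix (Fin N) (Fin N) ℝ) - exchMat N * Matrix.diagonal ψ) * (1 + exchMat N * Matrix.diagonal ψ) = 1 - exchMat N * Matrix.diagonal ψ * (exchMat N * Matrix.diagonal ψ) := by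
    noncomm_ring
  rw [mul_assoc, factor, sq]
  have : (1 : Matrix (Fin N) (Fin N) ℝ) - Matrix.diagonal (fun i => ψ i.rev * ψ i)
      = Matrix.diagonal (fun i => 1 - ψ i.rev * ψ i) := by
    rw [← Matrix.diagonal_one, Matrix.diagonal_sub]
  rw [this, diagonal_mul_diagonal]
  have hfun : (fun i => 1 / (1 - ψ i * ψ i.rev) * (1 - ψ i.rev * ψ i))
      = fun _ : Fin N => (1 : ℝ) := by
    funext i
    rw [mul_comm (ψ i.rev), one_div, inv_mul_cancel₀ (hψall i)]
  rw [hfun, Matrix.diagonal_one]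

/-- Perfect reconstruction of the two-channel spectral-sampling spline graph filter bank:
if `U₀` is orthogonal, `U₁ᵀ U₁ = I_{N/2}`, and `ψ_n ψ_{N-1-n} ≠ 1` for `n < N/2`, then with
`H̄_LP = (1/2)(I_N + Ψ)`, `H̄_HP = I_N - H̄_LP`, `H̄_INV = Ψ̃ (I_N - J_N Ψ)`,
`f_out = U₀ H̄_INV (S̄_uLP U₁ᵀ U₁ S̄_dLP H̄_LP + S̄_uHP U₁ᵀ U₁ S̄_dHP H̄_HP) U₀ᵀ f = f`
for every signal `f`. -/
theorem stmt11 (N : ℕ) (hN : 0 < N) (hNe : Even N) (h : N / 2 + N / 2 = N)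
    (ψ : Fin N → ℝ)
    (U0 : Matrix (Fin N) (Fin N) ℝ) (hU0 : U0 * U0ᵀ = 1) (hU0' : U0ᵀ * U0 = 1)
    (U1 : Matrix (Fin (N / 2)) (Fin (N / 2)) ℝ) (hU1 : U1ᵀ * U1 = 1)
    (hψ : ∀ n : Fin N, (n : ℕ) < N / 2 → ψ n * ψ n.rev ≠ 1)
    (f : Fin N → ℝ) :
    (U0 *
        (Matrix.diagonal (fun n => 1 / (1 - ψ n * ψ n.rev)) *
          ((1 : Matrix (Fin N) (Fin N) ℝ) - exchMat N * Matrix.diagonal ψ)) *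
        ((SdLP N h)ᵀ * U1ᵀ * U1 * SdLP N h *
            ((1 / 2 : ℝ) • ((1 : Matrix (Fin N) (Fin N) ℝ) + Matrix.diagonal ψ)) +
          (SdHP N h)ᵀ * U1ᵀ * U1 * SdHP N h *
            ((1 : Matrix (Fin N) (Fin N) ℝ) -
              (1 / 2 : ℝ) • ((1 : Matrix (Fin N) (Fin N) ℝ) + Matrix.diagonal ψ))) *
        U0ᵀ).mulVec f = f := by
  have hL : (SdLP N h)ᵀ * U1ᵀ * U1 = (SdLP N h)ᵀ := by rw [Matrix.mul_assoc, hU1, Matrix.mul_one]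
  have hH : (SdHP N h)ᵀ * U1ᵀ * U1 = (SdHP N h)ᵀ := by rw [Matrix.mul_assoc, hU1, Matrix.mul_one]
  rw [hL, hH, SdLP_mul N h, SdHP_mul N h, mul_assoc U0, core_eq N h ψ hψ, mul_one, hU0,
    Matrix.one_mulVec]
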